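/- arXiv:1710.01634 — 2 statements merged into one kernel-verified Lean document; each statement's English description precedes it below -/
import Mathlib

section
/- For every natural number d ≥ 1 and all reals x, y > 0, it holds that (x+y)^(d+1) - x^(d+1) ≤ λ · y^(d+1) + μ · x^(d+1), where λ = 2^(d/(d+1)) · (2^(1/(d+1)) - 1)^(-d) and μ = 2^(d/(d+1)) - 1. -/
theorem smoothness_inequality (d : ℕ) (hd : 1 ≤ d) (x y : ℝ) (hx : 0 < x) (hy : 0 < y) :
    (x + y) ^ (d + 1) - x ^ (d + 1) ≤
      ((2 : ℝ) ^ ((d : ℝ) / (d + 1)) * ((2 : ℝ) ^ ((1 : ℝ) / (d + 1)) - 1) ^ (-(d : ℝ))) * y ^ (d + 1)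
        + ((2 : ℝ) ^ ((d : ℝ) / (d + 1)) - 1) * x ^ (d + 1) := by
  set c : ℝ := (2 : ℝ) ^ ((1 : ℝ) / (d + 1)) with hc
  have hc1 : 1 < c := by
    apply Real.one_lt_rpow_iff_of_pos (by norm_num) |>.2
    left; exact ⟨by norm_num, by positivity⟩
  have hc0 : 0 < c := lt_trans one_pos hc1
  have hcm : 0 < c - 1 := by linarith
  have hcd : c ^ d = (2 : ℝ) ^ ((d : ℝ) / (d + 1)) := by
    rw [hc, ← Real.rpow_natCast ((2:ℝ) ^ ((1:ℝ)/(d+1))) d, ← Real.rpow_mul (by norm_num)]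
    ring_nf
  have hneg : (c - 1) ^ (-(d : ℝ)) = ((c - 1) ^ d)⁻¹ := by
    rw [Real.rpow_neg hcm.le, Real.rpow_natCast]
  have hconv : ConvexOn ℝ (Set.Ici (0:ℝ)) fun t : ℝ => t ^ (d + 1) := convexOn_pow (d + 1)
  have key := hconv.2 (Set.mem_Ici.2 (by positivity : (0:ℝ) ≤ c * x))
    (Set.mem_Ici.2 (by positivity : (0:ℝ) ≤ (c / (c - 1)) * y))
    (by positivity : (0:ℝ) ≤ 1 / c) (by positivity : (0:ℝ) ≤ (c - 1) / c)
    (by field_simp; ring)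
  simp only [smul_eq_mul] at key
  have h1 : (1 / c) * (c * x) + ((c - 1) / c) * ((c / (c - 1)) * y) = x + y := by
    field_simp
  rw [h1] at key
  have h2 : (1 / c) * (c * x) ^ (d + 1) = c ^ d * x ^ (d + 1) := by
    rw [mul_pow]
    field_simp
    ring
  have h3 : ((c - 1) / c) * ((c / (c - 1)) * y) ^ (d + 1) =
      c ^ d * ((c - 1) ^ d)⁻¹ * y ^ (d + 1) := by
    rw [mul_pow, div_pow]
    field_simp
    ring
  rw [h2, h3] at key
  rw [← hcd, hneg]
  nlinarith [pow_pos hx (d + 1), key]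
end

section
/- Let c : ℝ → ℝ be given by c(x) = ∑_{k=0}^{d} aₖ xᵏ with all aₖ ≥ 0, and let C(x) = x·c(x). Then for all reals 0 ≤ a ≤ b, ∫_a^b c(x) dx ≥ (C(b) - C(a))/(d+1). -/
theorem integral_ge_joint_cost_diff (d : ℕ) (coef : ℕ → ℝ) (hcoef : ∀ k, 0 ≤ coef k)
    (c C : ℝ → ℝ) (hc : ∀ x, c x = ∑ k ∈ Finset.range (d + 1), coef k * x ^ k)
    (hC : ∀ x, C x = x * c x) (a b : ℝ) (ha : 0 ≤ a) (hab : a ≤ b) :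
    (∫ x in a..b, c x) ≥ (C b - C a) / ((d : ℝ) + 1) := by
  have hint : (∫ x in a..b, c x)
      = ∑ k ∈ Finset.range (d + 1), coef k * ((b ^ (k + 1) - a ^ (k + 1)) / (k + 1)) := by
    rw [intervalIntegral.integral_congr (fun x _ => hc x)]
    rw [intervalIntegral.integral_finset_sum]
    · refine Finset.sum_congr rfl fun k _ => ?_
      rw [intervalIntegral.integral_const_mul, integral_pow]
    · intro k _
      exact (intervalIntegral.intervalIntegrable_pow k).const_mul _
  have hCdiff : C b - C a = ∑ k ∈ Finset.range (d + 1), coef k * (b ^ (k + 1) - a ^ (k + 1)) := by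
    rw [hC, hC, hc, hc, Finset.mul_sum, Finset.mul_sum, ← Finset.sum_sub_distrib]
    refine Finset.sum_congr rfl fun k _ => ?_
    ring
  rw [hint, hCdiff, Finset.sum_div]
  refine Finset.sum_le_sum fun k hk => ?_
  have hk' : (k : ℝ) + 1 ≤ (d : ℝ) + 1 := by
    have h := Nat.lt_succ_iff.mp (Finset.mem_range.mp hk)
    have : (k : ℝ) ≤ d := Nat.cast_le.mpr h
    linarith
  have hpow : 0 ≤ b ^ (k + 1) - a ^ (k + 1) :=
    sub_nonneg.mpr (pow_le_pow_left₀ ha hab _)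
  rw [mul_div_assoc]
  refine mul_le_mul_of_nonneg_left ?_ (hcoef k)
  exact div_le_div_of_nonneg_left hpow (by positivity) hk' |>.trans_eq rfl
end
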